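/- There exists a chestnut G that is not perfectly deterministic; that is, there exist a chestnut G, a set B of bursts for G, a state G'∈States(G,B) and a burst b∈B such that there are at least two distinct perfect total legal configuration trails for G' and b. -/

import Mathlib

/- Formalization of multi-soliton automata (Bordihn–Schulz),
   following the definitions of the paper. -/

namespace Soliton

variable {V : Type}

/-- An undirected, loopless graph on node set `V`. -/
structure SGraph (V : Type) where
  adj : V → V → Prop
  symm : ∀ u v, adj u v → adj v u
  loopless : ∀ v, ¬ adj v v

/-- Degree of a node: the number of neighbours. -/
noncomputable def degree (G : SGraph V) (n : V) : ℕ := Nat.card {v // G.adj n v}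

/-- An exterior node has degree 1. -/
def Exterior (G : SGraph V) (n : V) : Prop := degree G n = 1

/-- An interior node has degree at least 2. -/
def Interior (G : SGraph V) (n : V) : Prop := 2 ≤ degree G n

/-- A weight function: symmetric, with weight in {1,2} exactly on edges and 0 elsewhere. -/
def IsWeighting (G : SGraph V) (w : V → V → ℕ) : Prop :=
  (∀ u v, w u v = w v u) ∧
  (∀ u v, G.adj u v → w u v = 1 ∨ w u v = 2) ∧
  (∀ u v, ¬ G.adj u v → w u v = 0)

/-- The weight of a node: sum of the weights of the incident edges. -/
noncomputable def nodeWeight (w : V → V → ℕ) (n : V) : ℕ := ∑ᶠ v, w n v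

/-- A soliton graph: degrees between 1 and 3, node-weight conditions, and every
component contains an exterior node. -/
def IsSolitonGraph (G : SGraph V) (w : V → V → ℕ) : Prop :=
  IsWeighting G w ∧
  (∀ n, 1 ≤ degree G n ∧ degree G n ≤ 3) ∧
  (∀ n, Exterior G n → nodeWeight w n = 1 ∨ nodeWeight w n = 2) ∧
  (∀ n, Interior G n → nodeWeight w n = degree G n + 1) ∧
  (∀ n, ∃ e, Exterior G e ∧ Relation.ReflTransGen G.adj n e)

/-- A burst `(n₁,n₁')‖_{k₁}(n₂,n₂')‖_{k₂}⋯(n_m,n_m')⊥`: each soliton `i` has an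
entry node, an exit node, and a delay (the delay of the first soliton is 0). -/
structure Burst (V : Type) where
  m : ℕ
  hm : 0 < m
  entry : Fin m → V
  exit : Fin m → V
  delay : Fin m → ℕ
  delay_zero : delay ⟨0, hm⟩ = 0

/-- A burst for a soliton graph: all entry and exit nodes are exterior. -/
def IsBurstFor (G : SGraph V) (b : Burst V) : Prop :=
  ∀ i, Exterior G (b.entry i) ∧ Exterior G (b.exit i)

/-- The arrival time of soliton `i`: the sum of the delays up to and including `i`. -/
def Burst.arrival (b : Burst V) (i : Fin b.m) : ℕ :=
  ∑ j ∈ Finset.univ.filter (fun j => j ≤ i), b.delay j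

/-- The position of a soliton: `wait k` with `k ≥ 1` means `k` steps until entry,
`wait 0` means the soliton has left the graph, and `node n` means it is at node `n`. -/
inductive SolPos (V : Type) where
  | wait : ℕ → SolPos V
  | node : V → SolPos V

/-- The initial position map of a burst. -/
def initPos (b : Burst V) : Fin b.m → SolPos V := fun i =>
  if b.arrival i = 0 then SolPos.node (b.entry i) else SolPos.wait (b.arrival i)

/-- A position map is final if every soliton has left the graph. -/
def IsFinal {m : ℕ} (π : Fin m → SolPos V) : Prop := ∀ i, π i = SolPos.wait 0

/-- A configuration: a weighting of the graph together with a position map. -/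
abbrev Config (V : Type) (m : ℕ) := (V → V → ℕ) × (Fin m → SolPos V)

/-- The one-step (potential successor) relation on the position of a single soliton:
waiting counters decrease, soliton `i` enters at its entry node, a soliton in the
graph moves to an adjacent node, and a soliton may leave only at its exit node. -/
def PosStep (G : SGraph V) (b : Burst V) (i : Fin b.m) (p p' : SolPos V) : Prop :=
  (p = SolPos.wait 0 ∧ p' = SolPos.wait 0) ∨
  (p = SolPos.wait 1 ∧ p' = SolPos.node (b.entry i)) ∨
  (∃ k : ℕ, p = SolPos.wait (k + 2) ∧ p' = SolPos.wait (k + 1)) ∨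
  (∃ n : V, p = SolPos.node n ∧
    ((n = b.exit i ∧ p' = SolPos.wait 0) ∨ (∃ n', G.adj n n' ∧ p' = SolPos.node n')))

/-- Some soliton moves from `p` to `q` in the step from `π` to `π'`. -/
def MovesAlong {m : ℕ} (π π' : Fin m → SolPos V) (p q : V) : Prop :=
  ∃ i, π i = SolPos.node p ∧ π' i = SolPos.node q

/-- The weight of a traversed edge changes from `w` to `3 - w`; all other
weights remain unchanged. -/
def WeightStep {m : ℕ} (w w' : V → V → ℕ) (π π' : Fin m → SolPos V) : Prop :=
  ∀ p q : V,
    ((MovesAlong π π' p q ∨ MovesAlong π π' q p) → w' p q = 3 - w p q) ∧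
    (¬(MovesAlong π π' p q ∨ MovesAlong π π' q p) → w' p q = w p q)

/-- A single step between configurations. -/
def StepOk (G : SGraph V) (b : Burst V) (c c' : Config V b.m) : Prop :=
  (∀ i, PosStep G b i (c.2 i) (c'.2 i)) ∧ WeightStep c.1 c'.1 c.2 c'.2

/-- The conditions of a configuration trail involving two consecutive steps
`c, c', c''`: a soliton that has just entered moves on into the graph; a soliton
reaching its exit node from inside the graph leaves; consecutive edges traversed
by a soliton have alternating weights; a soliton never immediately turns around. -/
def TwoStepOk (G : SGraph V) (b : Burst V) (c c' c'' : Config V b.m) : Prop :=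
  ∀ i : Fin b.m,
    (∀ n : V, c'.2 i = SolPos.node n → Exterior G n → c.2 i = SolPos.wait 1 →
      ∃ r, c''.2 i = SolPos.node r) ∧
    (c'.2 i = SolPos.node (b.exit i) → Exterior G (b.exit i) →
      (∃ p, c.2 i = SolPos.node p) → c''.2 i = SolPos.wait 0) ∧
    (∀ p q r : V, c.2 i = SolPos.node p → c'.2 i = SolPos.node q → Interior G q →
      c''.2 i = SolPos.node r → c.1 p q ≠ c'.1 q r) ∧
    (c''.2 i ≠ SolPos.wait 0 → c''.2 i ≠ c'.2 i ∧ c''.2 i ≠ c.2 i)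

/-- A configuration trail for a soliton graph with weighting `w0` and a burst `b`. -/
def IsTrail (G : SGraph V) (w0 : V → V → ℕ) (b : Burst V) (len : ℕ)
    (cfg : Fin (len + 1) → Config V b.m) : Prop :=
  (cfg 0).1 = w0 ∧ (cfg 0).2 = initPos b ∧
  (∀ (j : ℕ) (h : j < len), StepOk G b (cfg ⟨j, by omega⟩) (cfg ⟨j + 1, by omega⟩)) ∧
  (∀ (h : 1 ≤ len) (i : Fin b.m) (n : V), (cfg 0).2 i = SolPos.node n →
    ∃ n', (cfg ⟨1, by omega⟩).2 i = SolPos.node n') ∧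
  (∀ (j : ℕ) (h : j + 2 ≤ len),
    TwoStepOk G b (cfg ⟨j, by omega⟩) (cfg ⟨j + 1, by omega⟩) (cfg ⟨j + 2, by omega⟩)) ∧
  (∀ (j : ℕ) (h : j < len), ¬ IsFinal (cfg ⟨j, by omega⟩).2)

/-- The legality conditions between two consecutive configurations: two solitons
at the same node move to different nodes, and two solitons never traverse the
same edge in opposite directions in the same step. -/
def LegalStep {m : ℕ} (G : SGraph V) (c c' : Config V m) : Prop :=
  (∀ i i' : Fin m, i ≠ i' → ∀ n : V, c.2 i = SolPos.node n → c.2 i' = SolPos.node n →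
    c'.2 i ≠ c'.2 i') ∧
  (∀ i i' : Fin m, i ≠ i' → ∀ p q : V, c.2 i = SolPos.node p → c.2 i' = SolPos.node q →
    G.adj p q → ¬(c'.2 i = SolPos.node q ∧ c'.2 i' = SolPos.node p))

/-- A legal configuration trail. -/
def IsLegalTrail (G : SGraph V) (w0 : V → V → ℕ) (b : Burst V) (len : ℕ)
    (cfg : Fin (len + 1) → Config V b.m) : Prop :=
  IsTrail G w0 b len cfg ∧
  ∀ (j : ℕ) (h : j < len), LegalStep G (cfg ⟨j, by omega⟩) (cfg ⟨j + 1, by omega⟩)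

/-- A total legal configuration trail: a legal trail whose last position map is final. -/
def IsTotalLegalTrail (G : SGraph V) (w0 : V → V → ℕ) (b : Burst V) (len : ℕ)
    (cfg : Fin (len + 1) → Config V b.m) : Prop :=
  IsLegalTrail G w0 b len cfg ∧ IsFinal (cfg (Fin.last len)).2

/-- `Result(G, b)`: the set of weightings obtained as final graphs of total legal
configuration trails for `(G, w0)` and `b`. -/
def ResultSet (G : SGraph V) (w0 : V → V → ℕ) (b : Burst V) : Set (V → V → ℕ) :=
  {w' | ∃ (len : ℕ) (cfg : Fin (len + 1) → Config V b.m),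
    IsTotalLegalTrail G w0 b len cfg ∧ (cfg (Fin.last len)).1 = w'}

/-- `States(G, B)`: the closure of `{w0}` under taking results of bursts in `B`. -/
inductive InStates (G : SGraph V) (w0 : V → V → ℕ) (B : Set (Burst V)) :
    (V → V → ℕ) → Prop
  | refl : InStates G w0 B w0
  | step {w' w'' : V → V → ℕ} {b : Burst V} (h : InStates G w0 B w') (hb : b ∈ B)
      (hr : w'' ∈ ResultSet G w' b) : InStates G w0 B w''

/-- `States(G, B)` as a set. -/
def StatesSet (G : SGraph V) (w0 : V → V → ℕ) (B : Set (Burst V)) :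
    Set (V → V → ℕ) := {w' | InStates G w0 B w'}

/-- The data of a configuration trail: a length together with a sequence of
configurations. -/
def TrailData (V : Type) (m : ℕ) := Σ len : ℕ, Fin (len + 1) → Config V m

/-- The trail data is a total legal configuration trail. -/
def IsTotalLegalTrailD (G : SGraph V) (w0 : V → V → ℕ) (b : Burst V)
    (t : TrailData V b.m) : Prop :=
  IsTotalLegalTrail G w0 b t.1 t.2

/-- The soliton automaton `A_B(G)` is strongly deterministic: for every state and
burst there is at most one total legal configuration trail. -/
def StronglyDet (G : SGraph V) (w0 : V → V → ℕ) (B : Set (Burst V)) : Prop :=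
  ∀ w', InStates G w0 B w' → ∀ b ∈ B, ∀ t t' : TrailData V b.m,
    IsTotalLegalTrailD G w' b t → IsTotalLegalTrailD G w' b t' → t = t'

/-- The prefix of length `i` of a sequence of configurations. -/
def prefixCfg {α : Type} {len : ℕ} (cfg : Fin (len + 1) → α) (i : ℕ) (h : i ≤ len) :
    Fin (i + 1) → α := fun j => cfg ⟨j, by have := j.isLt; omega⟩

/-- `SC(C)`: the set of position maps by which the configuration trail `C` can be
extended by one configuration. -/
def SC (G : SGraph V) (w0 : V → V → ℕ) (b : Burst V) (len : ℕ)
    (cfg : Fin (len + 1) → Config V b.m) : Set (Fin b.m → SolPos V) :=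
  {π' | ∃ wn : V → V → ℕ, IsTrail G w0 b (len + 1) (Fin.snoc cfg (wn, π'))}

/-- A configuration trail is perfect if no two of its configurations at distinct
positions are successor-equivalent (equal as configurations with equal sets of
possible successor position maps). -/
def IsPerfect (G : SGraph V) (w0 : V → V → ℕ) (b : Burst V) (len : ℕ)
    (cfg : Fin (len + 1) → Config V b.m) : Prop :=
  ∀ (i j : ℕ) (hij : i < j) (hj : j ≤ len),
    ¬(cfg ⟨i, by omega⟩ = cfg ⟨j, by omega⟩ ∧
      SC G w0 b i (prefixCfg cfg i (by omega)) = SC G w0 b j (prefixCfg cfg j hj))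

/-- The trail data is a perfect configuration trail. -/
def IsPerfectD (G : SGraph V) (w0 : V → V → ℕ) (b : Burst V)
    (t : TrailData V b.m) : Prop :=
  IsPerfect G w0 b t.1 t.2

/-- The soliton automaton `A_B(G)` is perfectly deterministic: for every state and
burst there is at most one perfect total legal configuration trail. -/
def PerfectlyDet (G : SGraph V) (w0 : V → V → ℕ) (B : Set (Burst V)) : Prop :=
  ∀ w', InStates G w0 B w' → ∀ b ∈ B, ∀ t t' : TrailData V b.m,
    IsTotalLegalTrailD G w' b t → IsPerfectD G w' b t →
    IsTotalLegalTrailD G w' b t' → IsPerfectD G w' b t' → t = t'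

/-- `g` is an upper bound on the amount of non-determinism of `A_B(G)`. -/
def DegreeBound (G : SGraph V) (w0 : V → V → ℕ) (B : Set (Burst V)) (g : ℕ) : Prop :=
  ∀ w', InStates G w0 B w' → ∀ b ∈ B, (ResultSet G w' b).ncard ≤ g

/-- The degree of non-determinism of `A_B(G)` is `g`: the smallest integer `g ≥ 1`
with `|Result(G', b)| ≤ g` for all states `G'` and bursts `b ∈ B`. -/
def HasDegreeOfNondeterminism (G : SGraph V) (w0 : V → V → ℕ) (B : Set (Burst V))
    (g : ℕ) : Prop :=
  1 ≤ g ∧ DegreeBound G w0 B g ∧ ∀ g', 1 ≤ g' → DegreeBound G w0 B g' → g ≤ g'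

/-- The edge `(u, v)` is used (in this direction) in the configuration trail `cfg`. -/
def UsedInTrail {m : ℕ} (len : ℕ) (cfg : Fin (len + 1) → Config V m) (u v : V) : Prop :=
  ∃ (j : ℕ) (h : j < len) (i : Fin m),
    (cfg ⟨j, by omega⟩).2 i = SolPos.node u ∧ (cfg ⟨j + 1, by omega⟩).2 i = SolPos.node v

/-- An indecomposable soliton graph: it contains no impervious path, i.e. every
edge is used in some configuration trail of some state reachable with some set
of bursts. -/
def Indecomposable (G : SGraph V) (w0 : V → V → ℕ) : Prop :=
  ∀ u v, G.adj u v →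
    ∃ B : Set (Burst V), (∀ b ∈ B, IsBurstFor G b) ∧
      ∃ w', InStates G w0 B w' ∧ ∃ b ∈ B, ∃ (len : ℕ) (cfg : Fin (len + 1) → Config V b.m),
        IsTrail G w' b len cfg ∧ (UsedInTrail len cfg u v ∨ UsedInTrail len cfg v u)

/-- Walks of a given length in a graph. -/
inductive WalkLen (G : SGraph V) : V → V → ℕ → Prop
  | refl (v : V) : WalkLen G v v 0
  | tail {u v x : V} {n : ℕ} : WalkLen G u v n → G.adj v x → WalkLen G u x (n + 1)

/-- The graph is connected. -/
def ConnectedG (G : SGraph V) : Prop := ∀ u v, Relation.ReflTransGen G.adj u v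

/-- The edge `(u, v)` is a bridge: removing it disconnects `u` from `v`. -/
def IsBridge (G : SGraph V) (u v : V) : Prop :=
  ¬ Relation.ReflTransGen (fun a c => G.adj a c ∧ ¬((a = u ∧ c = v) ∨ (a = v ∧ c = u))) u v

/-- The underlying graph is a tree: connected and every edge is a bridge. -/
def IsTreeG (G : SGraph V) : Prop := ConnectedG G ∧ ∀ u v, G.adj u v → IsBridge G u v

/-- `(u, v)` is an edge of the cycle `cyc`. -/
def CycleEdge {L : ℕ} (cyc : ZMod (2 * L) → V) (u v : V) : Prop :=
  ∃ t, (u = cyc t ∧ v = cyc (t + 1)) ∨ (v = cyc t ∧ u = cyc (t + 1))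

/-- The distance from a node to the cycle. -/
noncomputable def distToCycle (G : SGraph V) {L : ℕ} (cyc : ZMod (2 * L) → V)
    (n : V) : ℕ :=
  sInf {d | ∃ t, WalkLen G n (cyc t) d}

/-- A chestnut with distinguished cycle `cyc` of even length `2L`: an
indecomposable soliton graph consisting of a single cycle of even length
together with paths leading into it, such that entry points of different paths
(nodes of degree 3 on the cycle) are at even distance along the cycle, and paths
leading to the cycle meet (at nodes of degree 3 off the cycle) only at even
distance from their entry into the cycle. -/
def IsChestnutWith (G : SGraph V) (w : V → V → ℕ) (L : ℕ)
    (cyc : ZMod (2 * L) → V) : Prop :=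
  IsSolitonGraph G w ∧ Indecomposable G w ∧ 2 ≤ L ∧
  Function.Injective cyc ∧ (∀ t, G.adj (cyc t) (cyc (t + 1))) ∧ ConnectedG G ∧
  (∀ u v, G.adj u v → ¬ CycleEdge cyc u v → IsBridge G u v) ∧
  (∀ s t : ZMod (2 * L), degree G (cyc s) = 3 → degree G (cyc t) = 3 →
    ∃ d, t = s + 2 * d) ∧
  (∀ n, (∀ t, n ≠ cyc t) → degree G n = 3 → Even (distToCycle G cyc n))

/-- A chestnut. -/
def IsChestnut (G : SGraph V) (w : V → V → ℕ) : Prop :=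
  ∃ (L : ℕ) (cyc : ZMod (2 * L) → V), IsChestnutWith G w L cyc

/-- The burst `(x, y)⊥` of length 1. -/
def singleBurst (x y : V) : Burst V :=
  { m := 1, hm := one_pos, entry := fun _ => x, exit := fun _ => y,
    delay := fun _ => 0, delay_zero := rfl }

/-- The burst `(e, e)‖₁(e, e)⊥` of length 2: two solitons enter and exit at `e`,
the second entering one time step after the first. -/
def doubleBurst (e : V) : Burst V :=
  { m := 2, hm := two_pos, entry := fun _ => e, exit := fun _ => e,
    delay := fun i => if (i : ℕ) = 0 then 0 else 1, delay_zero := rfl }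

/-! ### Auxiliary construction -/

instance {V : Type} [DecidableEq V] : DecidableEq (SolPos V) := fun a b =>
  match a, b with
  | .wait k, .wait l =>
      if h : k = l then isTrue (by rw [h]) else isFalse (fun e => h (by cases e; rfl))
  | .wait _, .node _ => isFalse (fun e => by cases e)
  | .node _, .wait _ => isFalse (fun e => by cases e)
  | .node v, .node u =>
      if h : v = u then isTrue (by rw [h]) else isFalse (fun e => h (by cases e; rfl))

abbrev V6 := Fin 6

def adjB : V6 → V6 → Bool := fun u v =>
  decide ((u.val, v.val) ∈ [(0,1),(1,0),(1,2),(2,1),(2,3),(3,2),(3,0),(0,3),(0,4),(4,0),(2,5),(5,2)])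

def Gc : SGraph V6 := ⟨fun u v => adjB u v = true, by decide, by decide⟩

def wc : V6 → V6 → ℕ :=
  ![![0, 1, 0, 2, 1, 0], ![1, 0, 2, 0, 0, 0], ![0, 2, 0, 1, 0, 1],
    ![2, 0, 1, 0, 0, 0], ![1, 0, 0, 0, 0, 0], ![0, 0, 1, 0, 0, 0]]

instance Gc.adjDec : ∀ n v, Decidable (Gc.adj n v) := fun n v =>
  decidable_of_iff (adjB n v = true) Iff.rfl

lemma deg_eval : ∀ n, degree Gc n = ![3, 2, 3, 2, 1, 1] n := by
  intro n
  rw [degree, Nat.card_eq_fintype_card]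
  fin_cases n <;> decide

lemma nw_eval : ∀ n, nodeWeight wc n = ![4, 3, 4, 3, 1, 1] n := by
  intro n
  rw [nodeWeight, finsum_eq_sum_of_fintype]
  fin_cases n <;> decide

def bc : Burst V6 :=
  { m := 2, hm := two_pos, entry := ![4, 5], exit := ![5, 4],
    delay := ![0, 2], delay_zero := rfl }

def cfgA : Fin 8 → Config V6 2 :=
  ![
  (![![0, 1, 0, 2, 1, 0], ![1, 0, 2, 0, 0, 0], ![0, 2, 0, 1, 0, 1], ![2, 0, 1, 0, 0, 0], ![1, 0, 0, 0, 0, 0], ![0, 0, 1, 0, 0, 0]], ![.node 4, .wait 2]),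
  (![![0, 1, 0, 2, 2, 0], ![1, 0, 2, 0, 0, 0], ![0, 2, 0, 1, 0, 1], ![2, 0, 1, 0, 0, 0], ![2, 0, 0, 0, 0, 0], ![0, 0, 1, 0, 0, 0]], ![.node 0, .wait 1]),
  (![![0, 1, 0, 1, 2, 0], ![1, 0, 2, 0, 0, 0], ![0, 2, 0, 1, 0, 1], ![1, 0, 1, 0, 0, 0], ![2, 0, 0, 0, 0, 0], ![0, 0, 1, 0, 0, 0]], ![.node 3, .node 5]),
  (![![0, 1, 0, 1, 2, 0], ![1, 0, 2, 0, 0, 0], ![0, 2, 0, 2, 0, 2], ![1, 0, 2, 0, 0, 0], ![2, 0, 0, 0, 0, 0], ![0, 0, 2, 0, 0, 0]], ![.node 2, .node 2]),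
  (![![0, 1, 0, 1, 2, 0], ![1, 0, 1, 0, 0, 0], ![0, 1, 0, 2, 0, 1], ![1, 0, 2, 0, 0, 0], ![2, 0, 0, 0, 0, 0], ![0, 0, 1, 0, 0, 0]], ![.node 5, .node 1]),
  (![![0, 2, 0, 1, 2, 0], ![2, 0, 1, 0, 0, 0], ![0, 1, 0, 2, 0, 1], ![1, 0, 2, 0, 0, 0], ![2, 0, 0, 0, 0, 0], ![0, 0, 1, 0, 0, 0]], ![.wait 0, .node 0]),
  (![![0, 2, 0, 1, 1, 0], ![2, 0, 1, 0, 0, 0], ![0, 1, 0, 2, 0, 1], ![1, 0, 2, 0, 0, 0], ![1, 0, 0, 0, 0, 0], ![0, 0, 1, 0, 0, 0]], ![.wait 0, .node 4]),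
  (![![0, 2, 0, 1, 1, 0], ![2, 0, 1, 0, 0, 0], ![0, 1, 0, 2, 0, 1], ![1, 0, 2, 0, 0, 0], ![1, 0, 0, 0, 0, 0], ![0, 0, 1, 0, 0, 0]], ![.wait 0, .wait 0])]

def cfgB : Fin 8 → Config V6 2 :=
  ![
  (![![0, 1, 0, 2, 1, 0], ![1, 0, 2, 0, 0, 0], ![0, 2, 0, 1, 0, 1], ![2, 0, 1, 0, 0, 0], ![1, 0, 0, 0, 0, 0], ![0, 0, 1, 0, 0, 0]], ![.node 4, .wait 2]),
  (![![0, 1, 0, 2, 2, 0], ![1, 0, 2, 0, 0, 0], ![0, 2, 0, 1, 0, 1], ![2, 0, 1, 0, 0, 0], ![2, 0, 0, 0, 0, 0], ![0, 0, 1, 0, 0, 0]], ![.node 0, .wait 1]),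
  (![![0, 1, 0, 1, 2, 0], ![1, 0, 2, 0, 0, 0], ![0, 2, 0, 1, 0, 1], ![1, 0, 1, 0, 0, 0], ![2, 0, 0, 0, 0, 0], ![0, 0, 1, 0, 0, 0]], ![.node 3, .node 5]),
  (![![0, 1, 0, 1, 2, 0], ![1, 0, 2, 0, 0, 0], ![0, 2, 0, 2, 0, 2], ![1, 0, 2, 0, 0, 0], ![2, 0, 0, 0, 0, 0], ![0, 0, 2, 0, 0, 0]], ![.node 2, .node 2]),
  (![![0, 1, 0, 1, 2, 0], ![1, 0, 2, 0, 0, 0], ![0, 2, 0, 1, 0, 1], ![1, 0, 1, 0, 0, 0], ![2, 0, 0, 0, 0, 0], ![0, 0, 1, 0, 0, 0]], ![.node 5, .node 3]),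
  (![![0, 1, 0, 2, 2, 0], ![1, 0, 2, 0, 0, 0], ![0, 2, 0, 1, 0, 1], ![2, 0, 1, 0, 0, 0], ![2, 0, 0, 0, 0, 0], ![0, 0, 1, 0, 0, 0]], ![.wait 0, .node 0]),
  (![![0, 1, 0, 2, 1, 0], ![1, 0, 2, 0, 0, 0], ![0, 2, 0, 1, 0, 1], ![2, 0, 1, 0, 0, 0], ![1, 0, 0, 0, 0, 0], ![0, 0, 1, 0, 0, 0]], ![.wait 0, .node 4]),
  (![![0, 1, 0, 2, 1, 0], ![1, 0, 2, 0, 0, 0], ![0, 2, 0, 1, 0, 1], ![2, 0, 1, 0, 0, 0], ![1, 0, 0, 0, 0, 0], ![0, 0, 1, 0, 0, 0]], ![.wait 0, .wait 0])]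


lemma posStep_node_node {V : Type} {G : SGraph V} {b : Burst V} {i : Fin b.m} {n n' : V}
    (h : G.adj n n') : PosStep G b i (.node n) (.node n') :=
  .inr (.inr (.inr ⟨n, rfl, .inr ⟨n', h, rfl⟩⟩))

lemma posStep_node_exit {V : Type} {G : SGraph V} {b : Burst V} {i : Fin b.m} {n : V}
    (h : n = b.exit i) : PosStep G b i (.node n) (.wait 0) :=
  .inr (.inr (.inr ⟨n, rfl, .inl ⟨h, rfl⟩⟩))

lemma posStep_w0 {V : Type} {G : SGraph V} {b : Burst V} {i : Fin b.m} :
    PosStep G b i (.wait 0) (.wait 0) := .inl ⟨rfl, rfl⟩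

lemma posStep_w1 {V : Type} {G : SGraph V} {b : Burst V} {i : Fin b.m} :
    PosStep G b i (.wait 1) (.node (b.entry i)) := .inr (.inl ⟨rfl, rfl⟩)

lemma posStep_wk {V : Type} {G : SGraph V} {b : Burst V} {i : Fin b.m} (k : ℕ) :
    PosStep G b i (.wait (k + 2)) (.wait (k + 1)) := .inr (.inr (.inl ⟨k, rfl, rfl⟩))

set_option synthInstance.maxSize 4000
set_option synthInstance.maxHeartbeats 2000000
set_option maxHeartbeats 2000000

lemma stepA : ∀ j : Fin 7, StepOk Gc bc (cfgA j.castSucc) (cfgA j.succ) := by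
  intro j
  fin_cases j <;>
    refine ⟨fun i => ?_, by simp only [StepOk, WeightStep, MovesAlong]; decide⟩ <;>
    fin_cases i <;>
    first
      | exact posStep_w0
      | exact posStep_w1
      | exact posStep_wk 0
      | exact posStep_node_exit rfl
      | exact posStep_node_node (by decide)

lemma twoStepA : ∀ j : Fin 6,
    TwoStepOk Gc bc (cfgA ⟨j.val, by omega⟩) (cfgA ⟨j.val + 1, by omega⟩) (cfgA ⟨j.val + 2, by omega⟩) := by
  intro j
  fin_cases j <;> (simp only [TwoStepOk, Exterior, Interior, deg_eval]; decide)

lemma trailA_isTrail : IsTrail Gc wc bc 7 cfgA := by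
  refine ⟨rfl, by decide, ?_, ?_, ?_, ?_⟩
  · intro j h
    exact stepA ⟨j, h⟩
  · intro h i
    fin_cases i
    · exact fun n _ => ⟨0, rfl⟩
    · exact fun n hn => nomatch hn
  · intro j h
    exact twoStepA ⟨j, by omega⟩
  · have : ∀ j' : Fin 7, ¬ IsFinal (cfgA j'.castSucc).2 := by
      intro j'
      fin_cases j' <;> intro hf <;>
        first
          | exact absurd (hf ⟨0, by decide⟩) (by decide)
          | exact absurd (hf ⟨1, by decide⟩) (by decide)
    exact fun j h => this ⟨j, h⟩

lemma trailA_legal : IsLegalTrail Gc wc bc 7 cfgA := by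
  refine ⟨trailA_isTrail, ?_⟩
  intro j h
  have : ∀ j' : Fin 7, LegalStep Gc (cfgA j'.castSucc) (cfgA j'.succ) := by
    intro j'
    fin_cases j' <;> (simp only [LegalStep]; decide)
  exact this ⟨j, h⟩

lemma trailA_total : IsTotalLegalTrail Gc wc bc 7 cfgA := by
  refine ⟨trailA_legal, ?_⟩
  intro i
  fin_cases i <;> rfl

lemma trailA_perfect : IsPerfect Gc wc bc 7 cfgA := by
  intro i j hij hj hcon
  have h1 := hcon.1
  have : ∀ i' j' : Fin 8, i' < j' → cfgA i' ≠ cfgA j' := by decide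
  exact this ⟨i, by omega⟩ ⟨j, by omega⟩ (by simpa using hij) h1

lemma stepB : ∀ j : Fin 7, StepOk Gc bc (cfgB j.castSucc) (cfgB j.succ) := by
  intro j
  fin_cases j <;>
    refine ⟨fun i => ?_, by simp only [StepOk, WeightStep, MovesAlong]; decide⟩ <;>
    fin_cases i <;>
    first
      | exact posStep_w0
      | exact posStep_w1
      | exact posStep_wk 0
      | exact posStep_node_exit rfl
      | exact posStep_node_node (by decide)

lemma twoStepB : ∀ j : Fin 6,
    TwoStepOk Gc bc (cfgB ⟨j.val, by omega⟩) (cfgB ⟨j.val + 1, by omega⟩) (cfgB ⟨j.val + 2, by omega⟩) := by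
  intro j
  fin_cases j <;> (simp only [TwoStepOk, Exterior, Interior, deg_eval]; decide)

lemma trailB_isTrail : IsTrail Gc wc bc 7 cfgB := by
  refine ⟨rfl, by decide, ?_, ?_, ?_, ?_⟩
  · intro j h
    exact stepB ⟨j, h⟩
  · intro h i
    fin_cases i
    · exact fun n _ => ⟨0, rfl⟩
    · exact fun n hn => nomatch hn
  · intro j h
    exact twoStepB ⟨j, by omega⟩
  · have : ∀ j' : Fin 7, ¬ IsFinal (cfgB j'.castSucc).2 := by
      intro j'
      fin_cases j' <;> intro hf <;>
        first
          | exact absurd (hf ⟨0, by decide⟩) (by decide)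
          | exact absurd (hf ⟨1, by decide⟩) (by decide)
    exact fun j h => this ⟨j, h⟩

lemma trailB_legal : IsLegalTrail Gc wc bc 7 cfgB := by
  refine ⟨trailB_isTrail, ?_⟩
  intro j h
  have : ∀ j' : Fin 7, LegalStep Gc (cfgB j'.castSucc) (cfgB j'.succ) := by
    intro j'
    fin_cases j' <;> (simp only [LegalStep]; decide)
  exact this ⟨j, h⟩

lemma trailB_total : IsTotalLegalTrail Gc wc bc 7 cfgB := by
  refine ⟨trailB_legal, ?_⟩
  intro i
  fin_cases i <;> rfl

lemma trailB_perfect : IsPerfect Gc wc bc 7 cfgB := by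
  intro i j hij hj hcon
  have h1 := hcon.1
  have : ∀ i' j' : Fin 8, i' < j' → cfgB i' ≠ cfgB j' := by decide
  exact this ⟨i, by omega⟩ ⟨j, by omega⟩ (by simpa using hij) h1

lemma rtg_symm {α : Type} {r : α → α → Prop} (hs : ∀ a b, r a b → r b a) {a b : α}
    (h : Relation.ReflTransGen r a b) : Relation.ReflTransGen r b a := by
  induction h with
  | refl => exact .refl
  | tail _ h2 ih => exact .trans (.single (hs _ _ h2)) ih

lemma rtg_inv {α : Type} {r : α → α → Prop} {S : α → Prop}
    (h : ∀ a b, S a → r a b → S b) {u v : α}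
    (huv : Relation.ReflTransGen r u v) : S u → S v := by
  induction huv with
  | refl => exact id
  | tail _ h2 ih => exact fun hu => h _ _ (ih hu) h2

lemma reach0 : ∀ v : V6, Relation.ReflTransGen Gc.adj 0 v := by
  intro v
  have h01 : Gc.adj 0 1 := by decide
  have h12 : Gc.adj 1 2 := by decide
  have h03 : Gc.adj 0 3 := by decide
  have h04 : Gc.adj 0 4 := by decide
  have h25 : Gc.adj 2 5 := by decide
  fin_cases v
  · exact .refl
  · exact .single h01
  · exact .tail (.single h01) h12
  · exact .single h03
  · exact .single h04
  · exact .tail (.tail (.single h01) h12) h25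

lemma connGc : ConnectedG Gc := fun u v =>
  .trans (rtg_symm Gc.symm (reach0 u)) (reach0 v)

lemma bridge_of_inv (u v : V6) (S : V6 → Prop)
    (hc : ∀ a b, S a → (Gc.adj a b ∧ ¬((a = u ∧ b = v) ∨ (a = v ∧ b = u))) → S b)
    (hu : S u) (hv : ¬ S v) : IsBridge Gc u v :=
  fun hr => hv (rtg_inv hc hr hu)

lemma ext4 : Exterior Gc 4 := (deg_eval 4).trans rfl
lemma ext5 : Exterior Gc 5 := (deg_eval 5).trans rfl

lemma solGc : IsSolitonGraph Gc wc := by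
  refine ⟨⟨by decide, by decide, by decide⟩, ?_, ?_, ?_, ?_⟩
  · intro n; rw [deg_eval]; revert n; decide
  · intro n h; rw [Exterior, deg_eval] at h; rw [nw_eval]; revert h; revert n; decide
  · intro n h; rw [Interior, deg_eval] at h; rw [nw_eval, deg_eval]; revert h; revert n; decide
  · exact fun n => ⟨4, ext4, connGc n 4⟩

instance : NeZero (2 * 2) := ⟨by decide⟩

def cyc4 : ZMod (2 * 2) → V6 := fun t => Fin.castLE (by omega) (show Fin 4 from t)

lemma br04 : IsBridge Gc 0 4 :=
  bridge_of_inv 0 4 (fun x => x ≠ 4) (by decide) (by decide) (by decide)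
lemma br40 : IsBridge Gc 4 0 :=
  bridge_of_inv 4 0 (fun x => x = 4) (by decide) (by decide) (by decide)
lemma br25 : IsBridge Gc 2 5 :=
  bridge_of_inv 2 5 (fun x => x ≠ 5) (by decide) (by decide) (by decide)
lemma br52 : IsBridge Gc 5 2 :=
  bridge_of_inv 5 2 (fun x => x = 5) (by decide) (by decide) (by decide)

lemma burstOK : ∀ b ∈ ({bc} : Set (Burst V6)), IsBurstFor Gc b := by
  rintro b rfl i
  fin_cases i
  · exact ⟨ext4, ext5⟩
  · exact ⟨ext5, ext4⟩

lemma indecompGc : Indecomposable Gc wc := by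
  intro u v huv
  refine ⟨{bc}, burstOK, wc, .refl, bc, rfl, 7, cfgA, trailA_isTrail, ?_⟩
  fin_cases u <;> fin_cases v <;>
    first
      | exact absurd huv (by decide)
      | exact Or.inl ⟨0, of_decide_eq_true rfl, ⟨0, of_decide_eq_true rfl⟩, rfl, rfl⟩
      | exact Or.inl ⟨1, of_decide_eq_true rfl, ⟨0, of_decide_eq_true rfl⟩, rfl, rfl⟩
      | exact Or.inl ⟨2, of_decide_eq_true rfl, ⟨0, of_decide_eq_true rfl⟩, rfl, rfl⟩
      | exact Or.inl ⟨3, of_decide_eq_true rfl, ⟨0, of_decide_eq_true rfl⟩, rfl, rfl⟩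
      | exact Or.inl ⟨2, of_decide_eq_true rfl, ⟨1, of_decide_eq_true rfl⟩, rfl, rfl⟩
      | exact Or.inl ⟨3, of_decide_eq_true rfl, ⟨1, of_decide_eq_true rfl⟩, rfl, rfl⟩
      | exact Or.inl ⟨4, of_decide_eq_true rfl, ⟨1, of_decide_eq_true rfl⟩, rfl, rfl⟩
      | exact Or.inl ⟨5, of_decide_eq_true rfl, ⟨1, of_decide_eq_true rfl⟩, rfl, rfl⟩
      | exact Or.inr ⟨0, of_decide_eq_true rfl, ⟨0, of_decide_eq_true rfl⟩, rfl, rfl⟩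
      | exact Or.inr ⟨1, of_decide_eq_true rfl, ⟨0, of_decide_eq_true rfl⟩, rfl, rfl⟩
      | exact Or.inr ⟨2, of_decide_eq_true rfl, ⟨0, of_decide_eq_true rfl⟩, rfl, rfl⟩
      | exact Or.inr ⟨3, of_decide_eq_true rfl, ⟨0, of_decide_eq_true rfl⟩, rfl, rfl⟩
      | exact Or.inr ⟨2, of_decide_eq_true rfl, ⟨1, of_decide_eq_true rfl⟩, rfl, rfl⟩
      | exact Or.inr ⟨3, of_decide_eq_true rfl, ⟨1, of_decide_eq_true rfl⟩, rfl, rfl⟩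
      | exact Or.inr ⟨4, of_decide_eq_true rfl, ⟨1, of_decide_eq_true rfl⟩, rfl, rfl⟩
      | exact Or.inr ⟨5, of_decide_eq_true rfl, ⟨1, of_decide_eq_true rfl⟩, rfl, rfl⟩

lemma chestnutGc : IsChestnut Gc wc := by
  refine ⟨2, cyc4, solGc, indecompGc, le_refl 2, by decide, by decide, connGc, ?_, ?_, ?_⟩
  · intro u v h hnc
    fin_cases u <;> fin_cases v <;>
      first
        | exact absurd h (by decide)
        | exact absurd (by unfold CycleEdge; decide) hnc
        | exact br04
        | exact br40
        | exact br25
        | exact br52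
  · simp only [deg_eval]
    decide
  · intro n h1 h2
    rw [deg_eval] at h2
    fin_cases n
    · exact absurd (by decide) (h1 0)
    · exact absurd (by decide) (h1 1)
    · exact absurd (by decide) (h1 2)
    · exact absurd (by decide) (h1 3)
    · exact absurd h2 (by decide)
    · exact absurd h2 (by decide)

lemma cfg_ne : cfgA 4 ≠ cfgB 4 := by decide

/-- There is a chestnut which is not perfectly deterministic: for
some set `B` of bursts, some state `G' ∈ States(G,B)` and some burst `b ∈ B`
there are at least two distinct perfect total legal configuration trails. -/
theorem exists_chestnut_not_perfectly_deterministic :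
    ∃ (V : Type), Finite V ∧
      ∃ (G : SGraph V) (w : V → V → ℕ),
        IsChestnut G w ∧
        ∃ B : Set (Burst V), (∀ b ∈ B, IsBurstFor G b) ∧
          ∃ w', InStates G w B w' ∧ ∃ b ∈ B, ∃ t t' : TrailData V b.m,
            IsTotalLegalTrailD G w' b t ∧ IsPerfectD G w' b t ∧
            IsTotalLegalTrailD G w' b t' ∧ IsPerfectD G w' b t' ∧ t ≠ t' := by
  refine ⟨V6, inferInstance, Gc, wc, chestnutGc, {bc}, burstOK, wc, .refl, bc, rfl,
    ⟨7, cfgA⟩, ⟨7, cfgB⟩, trailA_total, trailA_perfect, trailB_total, trailB_perfect, ?_⟩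
  intro h
  injection h with h1 h2
  exact cfg_ne (congrFun h2 4)

end Soliton
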